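/- Let w ∈ S_n be an element of the Weyl group of SL_n, P the parabolic corresponding to the set of simple roots S_P, and Δ_P the sub-root-system generated by S_P. For the case λ = (d₁, d₂−d₁, …, n−d_{r−1}) and w = s_k·w₀^P with k = n − dᵢ for some 1 ≤ i < r (where w₀^P is the longest element of W^P), the set {α ∈ Δ₀⁺ : α ∉ Δ_P, w(α) > 0} consists of exactly one root, namely γ = α_{d_{i−1}+1} + ⋯ + α_{d_{i+1}−1} = ε_{d_{i−1}+1} − ε_{d_{i+1}}. -/

import Mathlib

open Finset

/-- for the parabolic P of SL_n given by the composition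
λ = (d₁, d₂−d₁, …, n−d_{r−1}) and w = s_k·w₀^P with k = n − dᵢ (1 ≤ i < r), the set
{α ∈ Δ₀⁺ : α ∉ Δ_P, w(α) > 0} = {ε_{d_{i−1}+1} − ε_{d_{i+1}}}.  Roots are encoded as
pairs (a,b) with 1 ≤ a < b ≤ n; α = (a,b) ∈ Δ_P iff a, b lie in the same block, and
w(α) > 0 iff w(a) < w(b). -/
theorem schubert_divisor_unique_root (n r : ℕ) (hr : 0 < r) (lam : Fin r → ℕ)
    (hpos : ∀ i, 0 < lam i) (hsum : ∑ i, lam i = n)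
    (d : ℕ → ℕ)
    (hd : ∀ k : ℕ, d k = ∑ j ∈ Finset.univ.filter (fun j : Fin r => (j : ℕ) < k), lam j)
    (rowOf : ℕ → ℕ)
    (hrowOf : ∀ x : ℕ, rowOf x = (Finset.univ.filter (fun k : Fin r => d ((k : ℕ) + 1) < x)).card)
    (i : ℕ) (hi1 : 1 ≤ i) (hir : i < r) (k : ℕ) (hk : k = n - d i)
    (w0 : ℕ → ℕ)
    (hw0 : ∀ x : ℕ, 1 ≤ x → x ≤ n → w0 x = x - d (rowOf x) + (n - d (rowOf x + 1)))
    (w : ℕ → ℕ)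
    (hw : ∀ x : ℕ, w x = if w0 x = k then k + 1 else if w0 x = k + 1 then k else w0 x) :
    ∀ a b : ℕ, 1 ≤ a → a < b → b ≤ n →
      ((rowOf a ≠ rowOf b ∧ w a < w b) ↔ (a = d (i - 1) + 1 ∧ b = d (i + 1))) := by
  -- basic facts about d
  have hd0 : d 0 = 0 := by rw [hd]; simp
  have hdmono : Monotone d := by
    intro s t hst
    rw [hd s, hd t]
    apply Finset.sum_le_sum_of_subset
    intro j hj
    simp only [Finset.mem_filter, Finset.mem_univ, true_and] at hj ⊢
    omega
  have hdle : ∀ t, d t ≤ n := by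
    intro t
    rw [hd, ← hsum]
    exact Finset.sum_le_sum_of_subset (Finset.filter_subset _ _)
  have hdsucc : ∀ t, ∀ ht : t < r, d (t + 1) = d t + lam ⟨t, ht⟩ := by
    intro t ht
    rw [hd (t + 1), hd t]
    have hins : Finset.univ.filter (fun j : Fin r => (j : ℕ) < t + 1)
        = insert ⟨t, ht⟩ (Finset.univ.filter (fun j : Fin r => (j : ℕ) < t)) := by
      ext j
      simp only [Finset.mem_filter, Finset.mem_univ, true_and, Finset.mem_insert, Fin.ext_iff]
      omega
    rw [hins, Finset.sum_insert (by simp)]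
    omega
  have hdlt : ∀ t, t < r → d t < d (t + 1) := by
    intro t ht
    rw [hdsucc t ht]
    have := hpos ⟨t, ht⟩
    omega
  have hdstrict : ∀ s t, s < t → t ≤ r → d s < d t := by
    intro s t h1 h2
    exact lt_of_lt_of_le (hdlt s (by omega)) (hdmono (by omega))
  -- characterization of rowOf
  have hrow_eq : ∀ t, t < r → ∀ x, d t < x → x ≤ d (t + 1) → rowOf x = t := by
    intro t ht x h1 h2
    rw [hrowOf]
    have hfil : Finset.univ.filter (fun k : Fin r => d ((k : ℕ) + 1) < x)
        = Finset.Iio (⟨t, ht⟩ : Fin r) := by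
      ext j
      simp only [Finset.mem_filter, Finset.mem_univ, true_and, Finset.mem_Iio, Fin.lt_def]
      constructor
      · intro hj
        by_contra hcon
        have : d (t + 1) ≤ d ((j : ℕ) + 1) := hdmono (by omega)
        omega
      · intro hj
        have : d ((j : ℕ) + 1) ≤ d t := hdmono (by omega)
        omega
    rw [hfil, Fin.card_Iio]
  have hexist : ∀ x, 1 ≤ x → x ≤ n →
      d (rowOf x) < x ∧ x ≤ d (rowOf x + 1) ∧ rowOf x < r := by
    intro x h1 h2
    have hdr : d r = n := by
      rw [hd, ← hsum]
      congr 1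
      apply Finset.filter_true_of_mem
      intro j _
      exact j.2
    obtain ⟨t, htr, hta, htb⟩ : ∃ t, t < r ∧ d t < x ∧ x ≤ d (t + 1) := by
      set t := Nat.findGreatest (fun t => d t < x) r with hT
      have htle : t ≤ r := Nat.findGreatest_le r
      have hP : d t < x := by
        have h0 : d 0 < x := by omega
        exact Nat.findGreatest_spec (P := fun t => d t < x) (Nat.zero_le r) h0
      have htr : t < r := by
        rcases lt_or_eq_of_le htle with h | h
        · exact h
        · exfalso; rw [h] at hP; omega
      have hnot : ¬ d (t + 1) < x :=
        Nat.findGreatest_is_greatest (P := fun t => d t < x) (n := r) (by omega) (by omega)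
      exact ⟨t, htr, hP, by omega⟩
    rw [hrow_eq t htr x hta htb]
    exact ⟨hta, htb, htr⟩
  -- main argument
  intro a b ha1 hab hbn
  have ha_n : a ≤ n := by omega
  have hb1 : 1 ≤ b := by omega
  obtain ⟨haL, haR, har⟩ := hexist a ha1 ha_n
  obtain ⟨hbL, hbR, hbr⟩ := hexist b hb1 hbn
  have hw0a : w0 a = a - d (rowOf a) + (n - d (rowOf a + 1)) := hw0 a ha1 ha_n
  have hw0b : w0 b = b - d (rowOf b) + (n - d (rowOf b + 1)) := hw0 b hb1 hbn
  have hdin : d i ≤ n := hdle i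
  have hdii : d i < d (i + 1) := hdlt i hir
  have hdi1 : d (i - 1) < d i := hdstrict (i - 1) i (by omega) (by omega)
  have hdi1n : d (i + 1) ≤ n := hdle _
  have hchA : d (rowOf a) ≤ d (rowOf a + 1) := hdmono (Nat.le_succ _)
  have hchA' : d (rowOf a + 1) ≤ n := hdle _
  have hchB : d (rowOf b) ≤ d (rowOf b + 1) := hdmono (Nat.le_succ _)
  have hchB' : d (rowOf b + 1) ≤ n := hdle _
  constructor
  · rintro ⟨hne, hwlt⟩
    have hst : rowOf a < rowOf b := by
      by_contra hcon
      have h1 : rowOf b < rowOf a := by omega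
      have h2 : d (rowOf b + 1) ≤ d (rowOf a) := hdmono (by omega)
      omega
    have hch1 : d (rowOf a + 1) ≤ d (rowOf b) := hdmono (by omega)
    have hba : w0 b < w0 a := by rw [hw0a, hw0b]; omega
    have hwa := hw a
    have hwb := hw b
    have hka1 : w0 a = k + 1 := by split_ifs at hwa hwb <;> omega
    have hkb1 : w0 b = k := by split_ifs at hwa hwb <;> omega
    -- identify rowOf a = i - 1
    have hAi : d (rowOf a) < d i := by omega
    have hAi2 : d i ≤ d (rowOf a + 1) := by omega
    have hsi : rowOf a = i - 1 := by
      by_contra hcon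
      rcases Nat.lt_or_ge (rowOf a) (i - 1) with h | h
      · have : d (rowOf a + 1) < d i := hdstrict _ _ (by omega) (by omega)
        omega
      · have : d i ≤ d (rowOf a) := hdmono (by omega)
        omega
    have hEq1 : d (rowOf a + 1) = d i := by
      rw [hsi, show i - 1 + 1 = i from by omega]
    have hEq2 : d (rowOf a) = d (i - 1) := by rw [hsi]
    have haval : a = d (i - 1) + 1 := by omega
    -- identify rowOf b = i
    have hBi : d (rowOf b) ≤ d i := by omega
    have hBi2 : d i < d (rowOf b + 1) := by omega
    have hti : rowOf b = i := by
      by_contra hcon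
      rcases Nat.lt_or_ge (rowOf b) i with h | h
      · have : d (rowOf b + 1) ≤ d i := hdmono (by omega)
        omega
      · have : d i < d (rowOf b) := hdstrict i _ (by omega) (by omega)
        omega
    have hEq3 : d (rowOf b) = d i := by rw [hti]
    have hEq4 : d (rowOf b + 1) = d (i + 1) := by rw [hti]
    have hbval : b = d (i + 1) := by omega
    exact ⟨haval, hbval⟩
  · rintro ⟨haval, hbval⟩
    have hsa : rowOf a = i - 1 := by
      apply hrow_eq (i - 1) (by omega) a (by omega)
      rw [show i - 1 + 1 = i from by omega]
      omega
    have htb : rowOf b = i := hrow_eq i hir b (by omega) (by omega)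
    have hw0a' : w0 a = k + 1 := by
      rw [hw0a, hsa, show i - 1 + 1 = i from by omega]
      omega
    have hw0b' : w0 b = k := by
      rw [hw0b, htb]
      omega
    refine ⟨by rw [hsa, htb]; omega, ?_⟩
    rw [hw a, hw b]
    split_ifs <;> omega
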